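/- The set of rank-1 projections in M_{n+1}(R) all of whose diagonal entries equal 1/(n+1) has exactly 2^n elements. -/

import Mathlib

open Matrix

noncomputable def sgn8 {n : ℕ} (b : Fin n → Bool) : Fin (n + 1) → ℝ :=
  Fin.cons 1 (fun i => if b i then 1 else -1)

lemma sgn8_zero {n : ℕ} (b : Fin n → Bool) : sgn8 b 0 = 1 := rfl

lemma sgn8_sq {n : ℕ} (b : Fin n → Bool) (i : Fin (n + 1)) : sgn8 b i * sgn8 b i = 1 := by
  refine Fin.cases ?_ (fun j => ?_) i
  · simp [sgn8]
  · simp only [sgn8, Fin.cons_succ]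
    by_cases h : b j <;> simp [h]

noncomputable def mat8 (n : ℕ) (b : Fin n → Bool) : Matrix (Fin (n + 1)) (Fin (n + 1)) ℝ :=
  Matrix.of fun i j => sgn8 b i * sgn8 b j / ((n : ℝ) + 1)

lemma np1_ne : ∀ n : ℕ, ((n : ℝ) + 1) ≠ 0 := fun n => by positivity

lemma mat8_mem (n : ℕ) (b : Fin n → Bool) :
    (mat8 n b)ᵀ = mat8 n b ∧ mat8 n b * mat8 n b = mat8 n b ∧ (mat8 n b).rank = 1 ∧
      ∀ i, mat8 n b i i = 1 / ((n : ℝ) + 1) := by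
  have hne := np1_ne n
  refine ⟨?_, ?_, ?_, ?_⟩
  · ext i j; simp [mat8, transpose_apply, mul_comm]
  · ext i j
    simp only [mat8, mul_apply, of_apply]
    have : ∀ k : Fin (n + 1), sgn8 b i * sgn8 b k / ((n : ℝ) + 1) *
        (sgn8 b k * sgn8 b j / ((n : ℝ) + 1)) =
        sgn8 b i * sgn8 b j / (((n : ℝ) + 1) * ((n : ℝ) + 1)) := by
      intro k
      rw [div_mul_div_comm,
        show sgn8 b i * sgn8 b k * (sgn8 b k * sgn8 b j)
          = sgn8 b k * sgn8 b k * (sgn8 b i * sgn8 b j) by ring, sgn8_sq b k, one_mul]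
    rw [Finset.sum_congr rfl (fun k _ => this k)]
    simp only [Finset.sum_const, Finset.card_univ, Fintype.card_fin, nsmul_eq_mul]
    push_cast
    field_simp
  · rw [Matrix.rank]
    have hmem : (mat8 n b).mulVec (Pi.single 0 1) ∈ LinearMap.range (mat8 n b).mulVecLin :=
      ⟨Pi.single 0 1, rfl⟩
    refine finrank_eq_one ⟨_, hmem⟩ ?_ ?_
    · intro h
      have h0 : ((mat8 n b).mulVec (Pi.single 0 1)) 0 = 0 := by
        rw [Submodule.mk_eq_zero] at h; rw [h]; rfl
      rw [mulVec_single] at h0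
      simp only [mul_one, mat8, of_apply, sgn8_zero, mul_one, one_mul, Pi.smul_apply,
        Matrix.col_apply, MulOpposite.op_one, one_smul] at h0
      exact hne (by field_simp at h0; simp at h0)
    · rintro ⟨w, x, rfl⟩
      refine ⟨((n : ℝ) + 1) * (∑ j, sgn8 b j * x j / ((n : ℝ) + 1)), ?_⟩
      apply Subtype.ext
      simp only [SetLike.mk_smul_mk]
      funext i
      simp only [Pi.smul_apply, mulVecLin_apply, mulVec, dotProduct, mulVec_single, mul_one,
        smul_eq_mul, mat8, of_apply, sgn8_zero, mul_one, Pi.smul_apply, Matrix.col_apply,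
        MulOpposite.op_one, one_smul]
      rw [mul_assoc, Finset.sum_mul, Finset.mul_sum]
      refine Finset.sum_congr rfl fun j _ => ?_
      field_simp
  · intro i
    simp only [mat8, of_apply, sgn8_sq]

lemma mat8_inj (n : ℕ) : Function.Injective (mat8 n) := by
  intro b b' h
  funext i
  have := congrFun (congrFun h 0) i.succ
  simp only [mat8, of_apply, sgn8_zero, one_mul] at this
  have h2 : sgn8 b i.succ = sgn8 b' i.succ := by
    field_simp at this; exact this
  simp only [sgn8, Fin.cons_succ] at h2
  by_cases hb : b i <;> by_cases hb' : b' i <;> simp [hb, hb'] at h2 ⊢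
  · norm_num at h2
  · norm_num at h2

theorem stmt8 (n : ℕ) :
    {P : Matrix (Fin (n + 1)) (Fin (n + 1)) ℝ |
      Pᵀ = P ∧ P * P = P ∧ P.rank = 1 ∧ ∀ i, P i i = 1 / ((n : ℝ) + 1)}.ncard = 2 ^ n := by
  have hne := np1_ne n
  have hset : {P : Matrix (Fin (n + 1)) (Fin (n + 1)) ℝ |
      Pᵀ = P ∧ P * P = P ∧ P.rank = 1 ∧ ∀ i, P i i = 1 / ((n : ℝ) + 1)} = Set.range (mat8 n) := by
    ext P
    constructor
    · rintro ⟨hsym, hidem, hrank, hdiag⟩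
      -- P has rank 1, so all columns are multiples of one vector
      rw [Matrix.rank] at hrank
      obtain ⟨v, hv0, hv⟩ := finrank_eq_one_iff'.mp hrank
      -- each column j of P is c j • v
      have hcol : ∀ j, ∃ c : ℝ, ∀ i, P i j = c * (v : Fin (n + 1) → ℝ) i := by
        intro j
        obtain ⟨c, hc⟩ := hv ⟨P.mulVec (Pi.single j 1), ⟨Pi.single j 1, rfl⟩⟩
        refine ⟨c, fun i => ?_⟩
        have := congrFun (congrArg Subtype.val hc) i
        simpa [mulVec_single] using this.symm
      choose c hc using hcol
      -- minor identity
      have hP00 : P 0 0 = 1 / ((n : ℝ) + 1) := hdiag 0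
      have hc0 : c 0 * (v : Fin (n + 1) → ℝ) 0 = 1 / ((n : ℝ) + 1) := by
        rw [← hc 0 0, hP00]
      have hminor : ∀ i j, P i j * (1 / ((n : ℝ) + 1)) = P 0 j * P i 0 := by
        intro i j
        rw [hc j i, hc j 0, hc 0 i, ← hc0]; ring
      have hPsym : ∀ i, P i 0 = P 0 i := by
        intro i
        have h := congrFun (congrFun hsym i) 0
        rw [transpose_apply] at h
        exact h.symm
      have hPij : ∀ i j, P i j = ((n : ℝ) + 1) * (P 0 j * P 0 i) := by
        intro i j
        have h := hminor i j
        rw [hPsym i] at h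
        rw [← h]
        field_simp
      -- diagonal entries of row 0 are ±(1/(n+1))
      have hrow0 : ∀ k, P 0 k = 1 / ((n : ℝ) + 1) ∨ P 0 k = -(1 / ((n : ℝ) + 1)) := by
        intro k
        have h1 : ((n : ℝ) + 1) * (P 0 k * P 0 k) = 1 / ((n : ℝ) + 1) := by
          rw [← hPij k k]; exact hdiag k
        have h2 : (P 0 k) ^ 2 = (1 / ((n : ℝ) + 1)) ^ 2 := by
          have hN : (0:ℝ) < (n : ℝ) + 1 := by positivity
          field_simp at h1 ⊢
          nlinarith [h1]
        rcases sq_eq_sq_iff_eq_or_eq_neg.mp h2 with h | h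
        · exact Or.inl h
        · exact Or.inr h
      refine ⟨fun i => decide (0 < P 0 i.succ), ?_⟩
      have hrow : ∀ k, P 0 k = sgn8 (fun i => decide (0 < P 0 i.succ)) k / ((n : ℝ) + 1) := by
        intro k
        refine Fin.cases ?_ (fun j => ?_) k
        · rw [hP00, sgn8_zero]
        · simp only [sgn8, Fin.cons_succ]
          rcases hrow0 j.succ with h | h
          · have hpos : 0 < P 0 j.succ := by
              rw [h]; positivity
            have hb : decide (0 < P 0 j.succ) = true := by simp [hpos]
            simp only [hb, if_true]
            exact h
          · have hpos : ¬ (0 < P 0 j.succ) := by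
              rw [h]
              simp only [not_lt, neg_nonpos]
              positivity
            have hb : decide (0 < P 0 j.succ) = false := by simp [hpos]
            simp only [hb, Bool.false_eq_true, if_false]
            rw [h]; ring
      funext i j
      rw [mat8, of_apply, hPij i j, hrow i, hrow j]
      field_simp
    · rintro ⟨b, rfl⟩
      exact mat8_mem n b
  rw [hset, ← Nat.card_coe_set_eq, Nat.card_range_of_injective (mat8_inj n)]
  simp [Nat.card_eq_fintype_card]
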